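/- Marginalisation satisfies the generalized postulate DFP-ES-3: for an OCF κ over Σ and signatures P' ⊆ P, the beliefs of marginalising first to Σ\P' and then to (Σ\P')\P equal the beliefs of marginalising directly to Σ\P. -/

import Mathlib

/-- Propositional formulas over atoms `ℕ`. -/
inductive Fm where
  | var : ℕ → Fm
  | top : Fm
  | bot : Fm
  | neg : Fm → Fm
  | conj : Fm → Fm → Fm
  | disj : Fm → Fm → Fm

/-- Evaluation of a formula under a total valuation. -/
def Fm.eval (v : ℕ → Bool) : Fm → Bool
  | var n => v n
  | top => true
  | bot => false
  | neg φ => !(φ.eval v)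
  | conj φ ψ => φ.eval v && ψ.eval v
  | disj φ ψ => φ.eval v || ψ.eval v

/-- The atoms mentioned in a formula. -/
def Fm.atoms : Fm → Set ℕ
  | var n => {n}
  | top => ∅
  | bot => ∅
  | neg φ => φ.atoms
  | conj φ ψ => φ.atoms ∪ ψ.atoms
  | disj φ ψ => φ.atoms ∪ ψ.atoms

/-- The language `L_S` over signature `S`: formulas mentioning only atoms in `S`. -/
def Lang (S : Set ℕ) : Set Fm := {φ | φ.atoms ⊆ S}

/-- Interpretations `Ω_S` over signature `S`. -/
def Itp (S : Set ℕ) := ↥S → Bool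

open Classical in
/-- Extend an interpretation over `S` to a total valuation (false outside `S`). -/
noncomputable def Itp.toVal {S : Set ℕ} (ω : Itp S) : ℕ → Bool :=
  fun n => if h : n ∈ S then ω ⟨n, h⟩ else false

/-- Satisfaction of a formula by an interpretation over `S`. -/
def Itp.sat {S : Set ℕ} (ω : Itp S) (φ : Fm) : Prop := φ.eval ω.toVal = true

/-- Restriction of an interpretation over `S` to a subsignature `S'`. -/
def Itp.restrict {S' S : Set ℕ} (h : S' ⊆ S) (ω : Itp S) : Itp S' :=
  fun n => ω ⟨n.1, h n.2⟩

/-- Models over `S` of a set of formulas. -/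
def Models (S : Set ℕ) (Γ : Set Fm) : Set (Itp S) := {ω | ∀ φ ∈ Γ, ω.sat φ}

/-- Semantic entailment over `S` between sets of formulas. -/
def Entails (S : Set ℕ) (Γ Δ : Set Fm) : Prop := Models S Γ ⊆ Models S Δ

/-- Consequence operator `Cn_S`. -/
def Cn (S : Set ℕ) (Γ : Set Fm) : Set Fm :=
  {φ | φ ∈ Lang S ∧ ∀ ω ∈ Models S Γ, ω.sat φ}

/-- Delgrande forgetting `F(Γ,P) = Cn_S(Γ) ∩ L_{S\P}`. -/
def Forget (S : Set ℕ) (Γ : Set Fm) (P : Set ℕ) : Set Fm :=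
  Cn S Γ ∩ Lang (S \ P)

/-- Reduction of a set of models to a subsignature. -/
def reduce {S' S : Set ℕ} (h : S' ⊆ S) (M : Set (Itp S)) : Set (Itp S') :=
  {ω' | ∃ ω ∈ M, ω.restrict h = ω'}

/-- Expansion of a set of models to a supersignature. -/
def expand {S' S : Set ℕ} (h : S' ⊆ S) (M' : Set (Itp S')) : Set (Itp S) :=
  {ω | ω.restrict h ∈ M'}

/-- An OCF over `S` is a ranking function attaining rank 0. -/
def IsOCF {S : Set ℕ} (κ : Itp S → ℕ) : Prop := ∃ ω, κ ω = 0

/-- The models (rank-0 interpretations) of an OCF. -/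
def OCFMod {S : Set ℕ} (κ : Itp S → ℕ) : Set (Itp S) := {ω | κ ω = 0}

/-- The belief set of an OCF over `S`. -/
def Bel (S : Set ℕ) (κ : Itp S → ℕ) : Set Fm :=
  {φ | φ ∈ Lang S ∧ ∀ ω ∈ OCFMod κ, ω.sat φ}

/-- Marginalisation of an OCF to a subsignature. -/
noncomputable def marg {S' S : Set ℕ} (h : S' ⊆ S) (κ : Itp S → ℕ) : Itp S' → ℕ :=
  fun ω' => sInf {n | ∃ ω : Itp S, ω.restrict h = ω' ∧ κ ω = n}

/-- Lifting of an OCF over `S'` to a supersignature `S`. -/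
def lift {S' S : Set ℕ} (h : S' ⊆ S) (κ' : Itp S' → ℕ) : Itp S → ℕ :=
  fun ω => κ' (ω.restrict h)

/-- Substitution of the atom `ρ` by formula `χ`. -/
def Fm.subst (ρ : ℕ) (χ : Fm) : Fm → Fm
  | var n => if n = ρ then χ else var n
  | top => top
  | bot => bot
  | neg φ => neg (subst ρ χ φ)
  | conj φ ψ => conj (subst ρ χ φ) (subst ρ χ ψ)
  | disj φ ψ => disj (subst ρ χ φ) (subst ρ χ ψ)

/-- Boole's atom forgetting: `forget(φ,ρ) = φ[ρ/⊤] ∨ φ[ρ/⊥]`. -/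
def boole (φ : Fm) (ρ : ℕ) : Fm := .disj (φ.subst ρ .top) (φ.subst ρ .bot)


open Classical in
lemma restrict_surj {C A : Set ℕ} (h : C ⊆ A) (ω'' : Itp C) :
    ∃ ω : Itp A, ω.restrict h = ω'' := by
  refine ⟨fun n => if hn : n.1 ∈ C then ω'' ⟨n.1, hn⟩ else false, ?_⟩
  funext n
  simp [Itp.restrict, n.2]

lemma restrict_trans {C B A : Set ℕ} (h1 : B ⊆ A) (h2 : C ⊆ B) (ω : Itp A) :
    (ω.restrict h1).restrict h2 = ω.restrict (h2.trans h1) := rfl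

lemma marg_fiber_nonempty {C A : Set ℕ} (h : C ⊆ A) (κ : Itp A → ℕ) (ω'' : Itp C) :
    {n | ∃ ω : Itp A, ω.restrict h = ω'' ∧ κ ω = n}.Nonempty := by
  obtain ⟨ω, hω⟩ := restrict_surj h ω''
  exact ⟨κ ω, ω, hω, rfl⟩

lemma marg_marg {A B C : Set ℕ} (h1 : B ⊆ A) (h2 : C ⊆ B) (κ : Itp A → ℕ) :
    marg h2 (marg h1 κ) = marg (h2.trans h1) κ := by
  funext ω''
  apply le_antisymm
  · -- direct inf attained by some ω
    obtain ⟨ω, hres, hκω⟩ := Nat.sInf_mem (marg_fiber_nonempty (h2.trans h1) κ ω'')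
    calc marg h2 (marg h1 κ) ω''
        ≤ marg h1 κ (ω.restrict h1) :=
          Nat.sInf_le ⟨ω.restrict h1, by rw [restrict_trans]; exact hres, rfl⟩
      _ ≤ κ ω := Nat.sInf_le ⟨ω, rfl, rfl⟩
      _ = marg (h2.trans h1) κ ω'' := hκω
  · obtain ⟨ω', hres', hval⟩ := Nat.sInf_mem (marg_fiber_nonempty h2 (marg h1 κ) ω'')
    obtain ⟨ω, hres, hκω⟩ := Nat.sInf_mem (marg_fiber_nonempty h1 κ ω')
    calc marg (h2.trans h1) κ ω''
        ≤ κ ω := Nat.sInf_le ⟨ω, by rw [← restrict_trans h1 h2, hres, hres'], rfl⟩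
      _ = marg h2 (marg h1 κ) ω'' := by rw [hκω]; exact hval

lemma bel_marg_congr {S A B : Set ℕ} (E : A = B) (hA : A ⊆ S) (hB : B ⊆ S)
    (κ : Itp S → ℕ) : Bel A (marg hA κ) = Bel B (marg hB κ) := by
  subst E; rfl

theorem stmt17 (S P P' : Set ℕ) (hS : S.Finite) (hP : P ⊆ S) (hP' : P' ⊆ P)
    (κ : Itp S → ℕ) (hκ : IsOCF κ) :
    Bel ((S \ P') \ P)
        (marg (Set.diff_subset : (S \ P') \ P ⊆ S \ P')
          (marg (Set.diff_subset : S \ P' ⊆ S) κ))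
      = Bel (S \ P) (marg (Set.diff_subset : S \ P ⊆ S) κ) := by
  rw [marg_marg]
  exact bel_marg_congr (by rw [Set.diff_diff, Set.union_eq_self_of_subset_left hP']) _ _ κ
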